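/- Let a ≠ 0 and b be real constants and let ε ∈ {1, −1}. Let T ⊂ (0, ∞) be an open interval on which a·t^{2ε} ≠ 0, and define z : T → ℝ by z(t) = (a·t^{2ε} − b²)²/(4a·t^{2ε}). Then z is differentiable and satisfies ((t/2)·z'(t))² = b²·z(t) + z(t)² for all t ∈ T. Consequently, any function y with y(t)² = 1 − z(t) satisfies (t²/4)·((y²)'(t))² = b²·(1 − y(t)²) + (1 − y(t)²)², i.e. y(t) = ±(1/(2t^{±1}))·√(4t^{±2} − a(t^{±2} − b²/a)²) solves the Chen-meridian ODE obtained from f²f''² = b²(1 − f'²) + (1 − f'²)² by the substitution f' = y(f). -/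

import Mathlib

/-- The function `z(t) = (a t^{2ε} − b²)² / (4 a t^{2ε})` (with `ε = ±1`) is
differentiable and solves `((t/2) z')² = b² z + z²`; consequently any `y` with
`y² = 1 − z` solves the Chen-meridian ODE `(t²/4)((y²)')² = b²(1 − y²) + (1 − y²)²`. -/
theorem chen_meridian_ode_solution
    (a b : ℝ) (ha : a ≠ 0) (ε : ℤ) (hε : ε = 1 ∨ ε = -1)
    (T : Set ℝ) (hT : IsOpen T) (hTc : T.OrdConnected) (hTsub : T ⊆ Set.Ioi 0)
    (hne : ∀ t ∈ T, a * t ^ (2 * ε) ≠ 0)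
    (z : ℝ → ℝ)
    (hz : ∀ t ∈ T, z t = (a * t ^ (2 * ε) - b ^ 2) ^ 2 / (4 * a * t ^ (2 * ε))) :
    (∀ t ∈ T, DifferentiableAt ℝ z t ∧
      ((t / 2) * deriv z t) ^ 2 = b ^ 2 * z t + (z t) ^ 2) ∧
    (∀ y : ℝ → ℝ, (∀ t ∈ T, (y t) ^ 2 = 1 - z t) →
      ∀ t ∈ T, (t ^ 2 / 4) * (deriv (fun s => (y s) ^ 2) t) ^ 2 =
        b ^ 2 * (1 - (y t) ^ 2) + (1 - (y t) ^ 2) ^ 2) := by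
  have hc2 : ((ε : ℝ)) ^ 2 = 1 := by rcases hε with h | h <;> subst h <;> norm_num
  have key : ∀ t ∈ T, DifferentiableAt ℝ z t ∧
      ((t / 2) * deriv z t) ^ 2 = b ^ 2 * z t + (z t) ^ 2 := by
    intro t ht
    have ht0 : (0:ℝ) < t := hTsub ht
    have htne : t ≠ 0 := ne_of_gt ht0
    have hpow : t ^ (2*ε) ≠ 0 := zpow_ne_zero _ htne
    have hden : 4 * a * t ^ (2*ε) ≠ 0 := by
      exact mul_ne_zero (mul_ne_zero (by norm_num) ha) hpow
    have h1 : HasDerivAt (fun s : ℝ => s ^ (2*ε)) (((2*ε : ℤ) : ℝ) * t ^ (2*ε - 1)) t :=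
      hasDerivAt_zpow (2*ε) t (Or.inl htne)
    have hnum : HasDerivAt (fun s : ℝ => (a * s ^ (2*ε) - b ^ 2) ^ 2)
        (2 * (a * t ^ (2*ε) - b ^ 2) ^ 1 * (a * (((2*ε : ℤ) : ℝ) * t ^ (2*ε - 1)))) t := by
      exact ((h1.const_mul a).sub_const (b^2)).pow 2
    have hd : HasDerivAt (fun s : ℝ => 4 * a * s ^ (2*ε))
        (4 * a * (((2*ε : ℤ) : ℝ) * t ^ (2*ε - 1))) t := h1.const_mul (4*a)
    have hg : HasDerivAt (fun s : ℝ => (a * s ^ (2*ε) - b ^ 2) ^ 2 / (4 * a * s ^ (2*ε)))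
        ((2 * (a * t ^ (2*ε) - b ^ 2) ^ 1 * (a * (((2*ε : ℤ) : ℝ) * t ^ (2*ε - 1))) * (4 * a * t ^ (2*ε))
          - (a * t ^ (2*ε) - b ^ 2) ^ 2 * (4 * a * (((2*ε : ℤ) : ℝ) * t ^ (2*ε - 1))))
          / (4 * a * t ^ (2*ε)) ^ 2) t := hnum.div hd hden
    have hev : z =ᶠ[nhds t] (fun s : ℝ => (a * s ^ (2*ε) - b ^ 2) ^ 2 / (4 * a * s ^ (2*ε))) :=
      Filter.eventuallyEq_of_mem (hT.mem_nhds ht) hz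
    have hdiff : DifferentiableAt ℝ z t := hg.differentiableAt.congr_of_eventuallyEq hev
    refine ⟨hdiff, ?_⟩
    have hderiv : deriv z t = ((2 * (a * t ^ (2*ε) - b ^ 2) ^ 1 * (a * (((2*ε : ℤ) : ℝ) * t ^ (2*ε - 1))) * (4 * a * t ^ (2*ε))
          - (a * t ^ (2*ε) - b ^ 2) ^ 2 * (4 * a * (((2*ε : ℤ) : ℝ) * t ^ (2*ε - 1))))
          / (4 * a * t ^ (2*ε)) ^ 2) := by
      rw [hev.deriv_eq, hg.deriv]
    rw [hderiv, hz t ht]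
    have hsub : t ^ (2*ε - 1) = t ^ (2*ε) * t⁻¹ := by
      rw [zpow_sub_one₀ htne]
    rw [hsub]
    push_cast
    generalize hs : t ^ (2*ε) = s at hpow hden ⊢
    field_simp
    linear_combination ((b^4 - a^2*s^2)^2) * hc2
  refine ⟨key, ?_⟩
  intro y hy t ht
  obtain ⟨hdiff, heq⟩ := key t ht
  have hev2 : (fun s => (y s) ^ 2) =ᶠ[nhds t] (fun s => 1 - z s) :=
    Filter.eventuallyEq_of_mem (hT.mem_nhds ht) hy
  have hder : deriv (fun s => (y s) ^ 2) t = -deriv z t := by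
    rw [hev2.deriv_eq]
    simp [deriv_const_sub, hdiff]
  rw [hder, hy t ht]
  ring_nf
  ring_nf at heq
  linarith [heq]
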